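/- For a regular cardinal κ, if A ≤_κ B, B has the κ-FN, and f is a κ-FN mapping on A, then there exists a κ-FN mapping g on B extending f (i.e., g(a) = f(a) for all a ∈ A). -/
import Mathlib


universe u v

open Cardinal

/-- `f` is a κ-Freese-Nation mapping on the partial order `P`. -/
def IsFNMap (κ : Cardinal.{u}) {P : Type u} [PartialOrder P] (f : P → Set P) : Prop :=
  (∀ a, #(f a) < κ) ∧
    ∀ a b : P, a ≤ b → ∃ c, c ∈ f a ∧ c ∈ f b ∧ a ≤ c ∧ c ≤ b

/-- The partial order `P` has the κ-Freese-Nation property. -/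
def HasFN (κ : Cardinal.{u}) (P : Type u) [PartialOrder P] : Prop :=
  ∃ f : P → Set P, IsFNMap κ f

/-- `A` is a κ-substructure of the ambient partial order `P`: for every `b : P`,
`{a ∈ A | a ≤ b}` has a cofinal subset of size `< κ` and `{a ∈ A | b ≤ a}` has a
coinitial subset of size `< κ`. -/
def SubKappa (κ : Cardinal.{u}) {P : Type u} [PartialOrder P] (A : Set P) : Prop :=
  ∀ b : P,
    (∃ U : Set P, U ⊆ A ∧ #U < κ ∧ (∀ u ∈ U, u ≤ b) ∧
      (∀ a ∈ A, a ≤ b → ∃ u ∈ U, a ≤ u)) ∧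
    (∃ V : Set P, V ⊆ A ∧ #V < κ ∧ (∀ v ∈ V, b ≤ v) ∧
      (∀ a ∈ A, b ≤ a → ∃ v ∈ V, v ≤ a))

/-- `A ≤_κ B` for two subsets of an ambient partial order:
`A ⊆ B` and `A` is a κ-substructure of the suborder `B`. -/
def RelSubKappa (κ : Cardinal.{u}) {P : Type u} [PartialOrder P] (A B : Set P) : Prop :=
  A ⊆ B ∧ SubKappa κ {x : B | (x : P) ∈ A}


/-- For regular κ, if A ≤_κ B, B has the κ-FN and f is a κ-FN mapping on A, then there
is a κ-FN mapping g on B extending f. -/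
theorem statement5 (κ : Cardinal.{u}) (hκ : κ.IsRegular) {B : Type u} [PartialOrder B]
    (A : Set B) (hA : SubKappa κ A) (hB : HasFN κ B)
    (f : ↥A → Set ↥A) (hf : IsFNMap κ f) :
    ∃ g : B → Set B, IsFNMap κ g ∧ ∀ a : ↥A, g ↑a = Subtype.val '' f a := by
  classical
  obtain ⟨h, hhκ, hh⟩ := hB
  choose U hUA hUκ hUle hUcof using fun b => (hA b).1
  choose V hVA hVκ hVge hVcoi using fun b => (hA b).2
  have hWA : ∀ b, U b ∪ V b ⊆ A := fun b => Set.union_subset (hUA b) (hVA b)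
  set F : A → Set B := fun a => Subtype.val '' f a with hF
  set g : B → Set B := fun b =>
    if hb : b ∈ A then F ⟨b, hb⟩
    else h b ∪ ⋃ w : (U b ∪ V b : Set B), F ⟨w.1, hWA b w.2⟩ with hg
  have hga : ∀ (a : B) (ha : a ∈ A), g a = F ⟨a, ha⟩ := by
    intro a ha; simp only [hg, dif_pos ha]
  have hgn : ∀ (b : B), b ∉ A →
      g b = h b ∪ ⋃ w : (U b ∪ V b : Set B), F ⟨w.1, hWA b w.2⟩ := by
    intro b hb; simp only [hg, dif_neg hb]
  have hFκ : ∀ a : A, #(F a) < κ := fun a => (Cardinal.mk_image_le).trans_lt (hf.1 a)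
  refine ⟨g, ⟨?_, ?_⟩, ?_⟩
  · intro b
    by_cases hb : b ∈ A
    · rw [hga b hb]; exact hFκ _
    · rw [hgn b hb]
      refine (Cardinal.mk_union_le _ _).trans_lt
        (Cardinal.add_lt_of_lt hκ.aleph0_le (hhκ b) ?_)
      have hι : #(U b ∪ V b : Set B) < κ :=
        (Cardinal.mk_union_le _ _).trans_lt
          (Cardinal.add_lt_of_lt hκ.aleph0_le (hUκ b) (hVκ b))
      exact (Cardinal.card_iUnion_lt_iff_forall_of_isRegular hκ hι).2 fun w => hFκ _
  · intro a b hab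
    by_cases ha : a ∈ A
    · by_cases hb : b ∈ A
      · obtain ⟨c, hc1, hc2, hc3, hc4⟩ := hf.2 ⟨a, ha⟩ ⟨b, hb⟩ hab
        exact ⟨c, by rw [hga a ha]; exact ⟨c, hc1, rfl⟩,
          by rw [hga b hb]; exact ⟨c, hc2, rfl⟩, hc3, hc4⟩
      · obtain ⟨u, huU, hau⟩ := hUcof b a ha hab
        obtain ⟨c, hc1, hc2, hc3, hc4⟩ := hf.2 ⟨a, ha⟩ ⟨u, hUA b huU⟩ hau
        refine ⟨c, by rw [hga a ha]; exact ⟨c, hc1, rfl⟩, ?_, hc3, (Subtype.coe_le_coe.2 hc4).trans (hUle b u huU)⟩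
        rw [hgn b hb]
        exact Or.inr (Set.mem_iUnion.2 ⟨⟨u, Or.inl huU⟩, ⟨c, hc2, rfl⟩⟩)
    · by_cases hb : b ∈ A
      · obtain ⟨v, hvV, hvb⟩ := hVcoi a b hb hab
        obtain ⟨c, hc1, hc2, hc3, hc4⟩ := hf.2 ⟨v, hVA a hvV⟩ ⟨b, hb⟩ hvb
        refine ⟨c, ?_, by rw [hga b hb]; exact ⟨c, hc2, rfl⟩,
          (hVge a v hvV).trans (Subtype.coe_le_coe.2 hc3), hc4⟩
        rw [hgn a ha]
        exact Or.inr (Set.mem_iUnion.2 ⟨⟨v, Or.inr hvV⟩, ⟨c, hc1, rfl⟩⟩)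
      · obtain ⟨c, hc1, hc2, hc3, hc4⟩ := hh a b hab
        exact ⟨c, by rw [hgn a ha]; exact Or.inl hc1,
          by rw [hgn b hb]; exact Or.inl hc2, hc3, hc4⟩
  · intro a
    rw [hga a.1 a.2]
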